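/- Let X, Y be topological real vector spaces and C ⊆ X, D ⊆ Y convex sets. Then fri(C × D) = (fri C) × (fri D). -/

import Mathlib

open Pointwise

/-- A face of a convex set `C`: a convex subset `F ⊆ C` such that whenever a point of `F`
lies in the open segment between two points of `C`, both endpoints belong to `F`. -/
def IsFace {X : Type*} [AddCommGroup X] [Module ℝ X] (C F : Set X) : Prop :=
  F ⊆ C ∧ Convex ℝ F ∧
    ∀ x ∈ F, ∀ y ∈ C, ∀ z ∈ C, x ∈ openSegment ℝ y z → y ∈ F ∧ z ∈ F

/-- The minimal face of `C` containing `x`: the intersection of all faces containing `x`. -/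
def minFace {X : Type*} [AddCommGroup X] [Module ℝ X] (C : Set X) (x : X) : Set X :=
  ⋂₀ {F | IsFace C F ∧ x ∈ F}

/-- The conic hull of a set. -/
def coneHull {X : Type*} [AddCommGroup X] [Module ℝ X] (S : Set X) : Set X :=
  {w | ∃ (a : ℝ) (s : X), 0 ≤ a ∧ s ∈ S ∧ w = a • s}

/-- The intrinsic core of a convex set. -/
def icr {X : Type*} [AddCommGroup X] [Module ℝ X] (C : Set X) : Set X :=
  {x ∈ C | ∀ y ∈ C, ∃ z ∈ C, x ∈ openSegment ℝ y z}

/-- The face relative interior of a convex set in a topological vector space. -/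
def fri {X : Type*} [AddCommGroup X] [Module ℝ X] [TopologicalSpace X] (C : Set X) : Set X :=
  {x ∈ C | C ⊆ closure (minFace C x)}

lemma isFace_self' {X : Type*} [AddCommGroup X] [Module ℝ X] {C : Set X} (hC : Convex ℝ C) :
    IsFace C C :=
  ⟨subset_rfl, hC, fun _ _ y hy z hz _ => ⟨hy, hz⟩⟩

lemma isFace_prod' {X Y : Type*} [AddCommGroup X] [Module ℝ X]
    [AddCommGroup Y] [Module ℝ Y] {C F : Set X} {D G : Set Y}
    (hF : IsFace C F) (hG : IsFace D G) : IsFace (C ×ˢ D) (F ×ˢ G) := by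
  refine ⟨Set.prod_mono hF.1 hG.1, hF.2.1.prod hG.2.1, ?_⟩
  rintro x hx y hy z hz ⟨a, b, ha, hb, hab, hsum⟩
  have h1 : a • y.1 + b • z.1 = x.1 := congrArg Prod.fst hsum
  have h2 : a • y.2 + b • z.2 = x.2 := congrArg Prod.snd hsum
  have H1 := hF.2.2 x.1 hx.1 y.1 hy.1 z.1 hz.1 ⟨a, b, ha, hb, hab, h1⟩
  have H2 := hG.2.2 x.2 hx.2 y.2 hy.2 z.2 hz.2 ⟨a, b, ha, hb, hab, h2⟩
  exact ⟨⟨H1.1, H2.1⟩, ⟨H1.2, H2.2⟩⟩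

lemma isFace_slice_left {X Y : Type*} [AddCommGroup X] [Module ℝ X]
    [AddCommGroup Y] [Module ℝ Y] {C : Set X} {D : Set Y} {H : Set (X × Y)}
    (hC : Convex ℝ C) (hH : IsFace (C ×ˢ D) H) (v : Y) (hv : v ∈ D) :
    IsFace C {u | u ∈ C ∧ (u, v) ∈ H} := by
  refine ⟨fun u hu => hu.1, ?_, ?_⟩
  · rintro u ⟨huC, huH⟩ w ⟨hwC, hwH⟩ a b ha hb hab
    refine ⟨hC huC hwC ha hb hab, ?_⟩
    have key : a • ((u, v) : X × Y) + b • (w, v) = (a • u + b • w, v) := by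
      simp [Prod.smul_mk, Prod.mk_add_mk, ← add_smul, hab]
    have := hH.2.1 huH hwH ha hb hab
    rwa [key] at this
  · rintro x ⟨hxC, hxH⟩ y hy z hz ⟨a, b, ha, hb, hab, hsum⟩
    have hseg : (x, v) ∈ openSegment ℝ ((y, v) : X × Y) (z, v) := by
      refine ⟨a, b, ha, hb, hab, ?_⟩
      simp [Prod.smul_mk, Prod.mk_add_mk, ← add_smul, hab, hsum]
    have := hH.2.2 (x, v) hxH (y, v) ⟨hy, hv⟩ (z, v) ⟨hz, hv⟩ hseg
    exact ⟨⟨hy, this.1⟩, ⟨hz, this.2⟩⟩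

lemma isFace_slice_right {X Y : Type*} [AddCommGroup X] [Module ℝ X]
    [AddCommGroup Y] [Module ℝ Y] {C : Set X} {D : Set Y} {H : Set (X × Y)}
    (hD : Convex ℝ D) (hH : IsFace (C ×ˢ D) H) (u : X) (hu : u ∈ C) :
    IsFace D {v | v ∈ D ∧ (u, v) ∈ H} := by
  refine ⟨fun v hv => hv.1, ?_, ?_⟩
  · rintro v ⟨hvD, hvH⟩ w ⟨hwD, hwH⟩ a b ha hb hab
    refine ⟨hD hvD hwD ha hb hab, ?_⟩
    have key : a • ((u, v) : X × Y) + b • (u, w) = (u, a • v + b • w) := by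
      simp [Prod.smul_mk, Prod.mk_add_mk, ← add_smul, hab]
    have := hH.2.1 hvH hwH ha hb hab
    rwa [key] at this
  · rintro x ⟨hxD, hxH⟩ y hy z hz ⟨a, b, ha, hb, hab, hsum⟩
    have hseg : (u, x) ∈ openSegment ℝ ((u, y) : X × Y) (u, z) := by
      refine ⟨a, b, ha, hb, hab, ?_⟩
      simp [Prod.smul_mk, Prod.mk_add_mk, ← add_smul, hab, hsum]
    have := hH.2.2 (u, x) hxH (u, y) ⟨hu, hy⟩ (u, z) ⟨hu, hz⟩ hseg
    exact ⟨⟨hy, this.1⟩, ⟨hz, this.2⟩⟩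

lemma minFace_prod {X Y : Type*} [AddCommGroup X] [Module ℝ X]
    [AddCommGroup Y] [Module ℝ Y] {C : Set X} {D : Set Y}
    (hC : Convex ℝ C) (hD : Convex ℝ D) (p : X × Y) (hp : p ∈ C ×ˢ D) :
    minFace (C ×ˢ D) p = minFace C p.1 ×ˢ minFace D p.2 := by
  apply Set.Subset.antisymm
  · intro q hq
    constructor
    · intro F hF
      have hface : IsFace (C ×ˢ D) (F ×ˢ D) := isFace_prod' hF.1 (isFace_self' hD)
      exact (hq (F ×ˢ D) ⟨hface, ⟨hF.2, hp.2⟩⟩).1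
    · intro G hG
      have hface : IsFace (C ×ˢ D) (C ×ˢ G) := isFace_prod' (isFace_self' hC) hG.1
      exact (hq (C ×ˢ G) ⟨hface, ⟨hp.1, hG.2⟩⟩).2
  · rintro q ⟨hq1, hq2⟩ H ⟨hH, hpH⟩
    have hq1C : q.1 ∈ C := hq1 C ⟨isFace_self' hC, hp.1⟩
    have hq2D : q.2 ∈ D := hq2 D ⟨isFace_self' hD, hp.2⟩
    have hF := isFace_slice_left hC hH p.2 hp.2
    have hG := isFace_slice_right hD hH p.1 hp.1
    have h1 : (q.1, p.2) ∈ H := (hq1 _ ⟨hF, hp.1, by simpa using hpH⟩).2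
    have h2 : (p.1, q.2) ∈ H := (hq2 _ ⟨hG, hp.2, by simpa using hpH⟩).2
    have hm : (1/2 : ℝ) • ((q.1, p.2) : X × Y) + (1/2 : ℝ) • (p.1, q.2) ∈ H :=
      hH.2.1 h1 h2 (by norm_num) (by norm_num) (by norm_num)
    have hseg : (1/2 : ℝ) • ((q.1, p.2) : X × Y) + (1/2 : ℝ) • (p.1, q.2)
        ∈ openSegment ℝ q p := by
      refine ⟨1/2, 1/2, by norm_num, by norm_num, by norm_num, ?_⟩
      ext <;> simp <;> module
    exact (hH.2.2 _ hm q ⟨hq1C, hq2D⟩ p hp hseg).1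

/-- product rule for the face relative interior. -/
theorem fri_prod {X Y : Type*} [AddCommGroup X] [Module ℝ X] [TopologicalSpace X]
    [IsTopologicalAddGroup X] [ContinuousSMul ℝ X]
    [AddCommGroup Y] [Module ℝ Y] [TopologicalSpace Y]
    [IsTopologicalAddGroup Y] [ContinuousSMul ℝ Y]
    (C : Set X) (D : Set Y) (hC : Convex ℝ C) (hD : Convex ℝ D) :
    fri (C ×ˢ D) = (fri C) ×ˢ (fri D) := by
  ext p
  simp only [fri, Set.mem_setOf_eq, Set.mem_prod]
  constructor
  · rintro ⟨hp, hsub⟩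
    rw [minFace_prod hC hD p hp, closure_prod_eq] at hsub
    exact ⟨⟨hp.1, fun x hx => (hsub (Set.mk_mem_prod hx hp.2)).1⟩, ⟨hp.2, fun y hy => (hsub (Set.mk_mem_prod hp.1 hy)).2⟩⟩
  · rintro ⟨⟨h1, hs1⟩, ⟨h2, hs2⟩⟩
    refine ⟨⟨h1, h2⟩, ?_⟩
    rw [minFace_prod hC hD p ⟨h1, h2⟩, closure_prod_eq]
    exact fun q hq => ⟨hs1 hq.1, hs2 hq.2⟩
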